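/- Band spectrum approximation (pointwise form): let C > 1 and let p = (p_x, p_y, p_z) ∈ ℝ³ satisfy I(p) ≥ 0 and |p_z| < C. For n ≥ 1 say that p lies in the band set σₙ if the third coordinate of Tⁿ(p) has absolute value at most C. Then p has bounded forward orbit under T if and only if for every n ≥ 1, p lies in σₙ or in σₙ₊₁. -/
import Mathlib


/-- The Fibonacci trace map. -/
noncomputable def traceMap : ℝ × ℝ × ℝ → ℝ × ℝ × ℝ :=
  fun p => (2 * p.1 * p.2.1 - p.2.2, p.1, p.2.1)

/-- The Fricke–Vogt invariant. -/
noncomputable def frickeVogt : ℝ × ℝ × ℝ → ℝ :=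
  fun p => p.1 ^ 2 + p.2.1 ^ 2 + p.2.2 ^ 2 - 2 * p.1 * p.2.1 * p.2.2 - 1

set_option maxHeartbeats 1000000

lemma frickeVogt_traceMap (q : ℝ × ℝ × ℝ) : frickeVogt (traceMap q) = frickeVogt q := by
  simp only [traceMap, frickeVogt]; ring

lemma frickeVogt_iterate (p : ℝ × ℝ × ℝ) (n : ℕ) :
    frickeVogt (traceMap^[n] p) = frickeVogt p := by
  induction n with
  | zero => rfl
  | succ n ih => rw [Function.iterate_succ_apply', frickeVogt_traceMap, ih]

theorem band_spectrum_approximation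
    (C : ℝ) (hC : 1 < C) (p : ℝ × ℝ × ℝ) (hI : 0 ≤ frickeVogt p)
    (hz : |p.2.2| < C) :
    Bornology.IsBounded (Set.range fun n : ℕ => traceMap^[n] p) ↔
      ∀ n : ℕ, 1 ≤ n →
        (|(traceMap^[n] p).2.2| ≤ C ∨ |(traceMap^[n + 1] p).2.2| ≤ C) := by
  set V := frickeVogt p with hVdef
  set x : ℕ → ℝ := fun m => (traceMap^[m] p).2.2 with hxdef
  have hx1 : ∀ m, (traceMap^[m] p).2.1 = x (m + 1) := by
    intro m
    simp only [hxdef, Function.iterate_succ_apply', traceMap]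
  have hx2 : ∀ m, (traceMap^[m] p).1 = x (m + 2) := by
    intro m
    have h := hx1 (m + 1)
    rw [Function.iterate_succ_apply'] at h
    simpa [traceMap] using h
  have heq : ∀ m, traceMap^[m] p = (x (m + 2), x (m + 1), x m) := by
    intro m
    have : traceMap^[m] p =
        ((traceMap^[m] p).1, (traceMap^[m] p).2.1, (traceMap^[m] p).2.2) := rfl
    rw [this, hx1 m, hx2 m]
  have hrec : ∀ m, x (m + 3) = 2 * x (m + 2) * x (m + 1) - x m := by
    intro m
    have h1 := heq (m + 1)
    rw [Function.iterate_succ_apply', heq m] at h1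
    have := congrArg Prod.fst h1
    simpa [traceMap] using this.symm
  have hinv : ∀ m,
      x (m + 2) ^ 2 + x (m + 1) ^ 2 + x m ^ 2
        - 2 * x (m + 2) * x (m + 1) * x m - 1 = V := by
    intro m
    have h := frickeVogt_iterate p m
    rw [heq m] at h
    rw [hVdef, ← h]
    simp only [frickeVogt]
  have hx0 : |x 0| < C := hz
  have hV0 : 0 ≤ V := hI
  constructor
  · -- bounded → bands
    intro hb n hn
    by_contra hcon
    push_neg at hcon
    obtain ⟨h2, h3⟩ := hcon
    obtain ⟨R, hR⟩ := isBounded_iff_forall_norm_le.mp hb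
    have hxR : ∀ m, |x m| ≤ R := by
      intro m
      have h1 : ‖(traceMap^[m] p).2‖ ≤ ‖traceMap^[m] p‖ := norm_snd_le _
      have h2' : ‖(traceMap^[m] p).2.2‖ ≤ ‖(traceMap^[m] p).2‖ := norm_snd_le _
      have := hR _ ⟨m, rfl⟩
      calc |x m| = ‖(traceMap^[m] p).2.2‖ := rfl
        _ ≤ ‖traceMap^[m] p‖ := le_trans h2' h1
        _ ≤ R := this
    -- descend to an escape configuration
    have key : ∀ n, 1 ≤ n → C < |x n| → C < |x (n + 1)| →
        ∃ i, C < |x (i + 1)| ∧ C < |x (i + 2)| ∧ |x i| ≤ |x (i + 2)| := by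
      intro n
      induction n using Nat.strong_induction_on with
      | _ n ih =>
        intro h1 ha hb'
        obtain ⟨m, rfl⟩ : ∃ m, n = m + 1 := ⟨n - 1, (Nat.succ_pred_eq_of_pos h1).symm⟩
        by_cases hc : |x m| ≤ |x (m + 2)|
        · exact ⟨m, ha, hb', hc⟩
        · push_neg at hc
          have hcm : C < |x m| := lt_trans hb' hc
          rcases Nat.eq_zero_or_pos m with rfl | hm
          · exact absurd hcm (not_lt.mpr hx0.le)
          · exact ih m (Nat.lt_succ_self m) hm hcm ha
    obtain ⟨i, hi1, hi2, hi0⟩ := key n hn h2 h3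
    have grow : ∀ k,
        (C < |x (i + 1 + k)| ∧ C < |x (i + 2 + k)| ∧ |x (i + k)| ≤ |x (i + 2 + k)|)
          ∧ C * C ^ k ≤ |x (i + 2 + k)| := by
      intro k
      induction k with
      | zero => exact ⟨⟨hi1, hi2, hi0⟩, by simpa using hi2.le⟩
      | succ k ihk =>
        obtain ⟨⟨ha, hb', hc'⟩, hg⟩ := ihk
        have hr := hrec (i + k)
        have habs : 2 * |x (i + k + 2)| * |x (i + k + 1)| - |x (i + k)| ≤ |x (i + k + 3)| := by
          have h1 : |2 * x (i + k + 2) * x (i + k + 1)| - |x (i + k)|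
              ≤ |2 * x (i + k + 2) * x (i + k + 1) - x (i + k)| :=
            abs_sub_abs_le_abs_sub _ _
          have h2' : |2 * x (i + k + 2) * x (i + k + 1)|
              = 2 * |x (i + k + 2)| * |x (i + k + 1)| := by
            rw [abs_mul, abs_mul, abs_two]
          rw [hr]
          rw [h2'] at h1
          convert h1 using 3
        have ea : C < |x (i + k + 1)| := by
          have : i + 1 + k = i + k + 1 := by ring
          rwa [this] at ha
        have eb : C < |x (i + k + 2)| := by
          have : i + 2 + k = i + k + 2 := by ring
          rwa [this] at hb'
        have ec : |x (i + k)| ≤ |x (i + k + 2)| := by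
          have : i + 2 + k = i + k + 2 := by ring
          rwa [this] at hc'
        have eg : C * C ^ k ≤ |x (i + k + 2)| := by
          have : i + 2 + k = i + k + 2 := by ring
          rwa [this] at hg
        have hCpos : (0:ℝ) < C := lt_trans one_pos hC
        have hkpos : (0:ℝ) < C ^ k := pow_pos hCpos k
        have big : C * |x (i + k + 2)| ≤ |x (i + k + 3)| := by
          nlinarith [habs, ea, eb, ec, hC]
        refine ⟨⟨?_, ?_, ?_⟩, ?_⟩
        · have : i + 1 + (k + 1) = i + k + 2 := by ring
          rw [this]; exact eb
        · have : i + 2 + (k + 1) = i + k + 3 := by ring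
          rw [this]
          nlinarith [big, eb, hC]
        · have e1 : i + (k + 1) = i + k + 1 := by ring
          have e2 : i + 2 + (k + 1) = i + k + 3 := by ring
          rw [e1, e2]
          nlinarith [habs, ea, eb, ec, hC]
        · have e2 : i + 2 + (k + 1) = i + k + 3 := by ring
          rw [e2, pow_succ]
          calc C * (C ^ k * C) = C * (C * C ^ k) := by ring
            _ ≤ C * |x (i + k + 2)| := by
                exact mul_le_mul_of_nonneg_left eg hCpos.le
            _ ≤ |x (i + k + 3)| := big
    obtain ⟨k, hk⟩ := pow_unbounded_of_one_lt R hC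
    have h1 := (grow k).2
    have h2' := hxR (i + 2 + k)
    have hkpos : (0:ℝ) < C ^ k := pow_pos (lt_trans one_pos hC) k
    nlinarith [h1, h2', hk, hkpos, hC]
  · -- bands → bounded
    intro h
    rw [isBounded_iff_forall_norm_le]
    set B := V + 1 + 2 * C ^ 2 with hBdef
    have hCB : C ≤ B := by nlinarith [hV0, hC]
    have hbound : ∀ m, |x m| ≤ B := by
      intro m
      match m with
      | 0 => exact le_trans hx0.le hCB
      | (m + 1) =>
        rcases h (m + 1) (by omega) with hle | hle
        · exact le_trans hle hCB
        · by_cases hm' : |x (m + 1)| ≤ C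
          · exact le_trans hm' hCB
          push_neg at hm'
          have hprev : |x m| ≤ C := by
            match m with
            | 0 => exact hx0.le
            | (m' + 1) =>
              rcases h (m' + 1) (by omega) with h' | h'
              · exact h'
              · exact absurd h' (not_le.mpr hm')
          have hq := hinv m
          have h2abc : 2 * x (m + 2) * x (m + 1) * x m ≤ 2 * C * |x (m + 1)| * C := by
            have e1 : |2 * x (m + 2) * x (m + 1) * x m|
                = 2 * |x (m + 2)| * |x (m + 1)| * |x m| := by
              rw [abs_mul, abs_mul, abs_mul, abs_two]
            have e2 : 2 * |x (m + 2)| * |x (m + 1)| * |x m| ≤ 2 * C * |x (m + 1)| * C := by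
              have f1 : 2 * |x (m + 2)| ≤ 2 * C := by linarith
              have f2 : 2 * |x (m + 2)| * |x (m + 1)| ≤ 2 * C * |x (m + 1)| :=
                mul_le_mul_of_nonneg_right f1 (abs_nonneg _)
              have f3 : (0:ℝ) ≤ 2 * C * |x (m + 1)| :=
                mul_nonneg (by linarith) (abs_nonneg _)
              exact mul_le_mul f2 hprev (abs_nonneg _) f3
            calc 2 * x (m + 2) * x (m + 1) * x m
                ≤ |2 * x (m + 2) * x (m + 1) * x m| := le_abs_self _
              _ = 2 * |x (m + 2)| * |x (m + 1)| * |x m| := e1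
              _ ≤ 2 * C * |x (m + 1)| * C := e2
          have hsq : x (m + 1) ^ 2 ≤ V + 1 + 2 * C ^ 2 * |x (m + 1)| := by
            nlinarith [hq, h2abc, sq_nonneg (x (m + 2)), sq_nonneg (x m)]
          have habs2 : |x (m + 1)| ^ 2 ≤ V + 1 + 2 * C ^ 2 * |x (m + 1)| := by
            rwa [sq_abs]
          nlinarith [habs2, hm', hC, hV0, abs_nonneg (x (m + 1))]
    have hB0 : 0 ≤ B := le_trans (le_of_lt (lt_trans one_pos hC)) hCB
    refine ⟨B, ?_⟩
    rintro q ⟨m, rfl⟩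
    show ‖traceMap^[m] p‖ ≤ B
    rw [heq m, Prod.norm_def, Prod.norm_def]
    simp only [Real.norm_eq_abs]
    exact max_le (hbound _) (max_le (hbound _) (hbound _))
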